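/- For b ∈ (0, π/2) and k² = sin²b/(1 + cos²b), the identity I₁(b) = (4/3)·√(2/(1+k²))·(E(k) − ((1−k²)(1+3k²)/(4(1+k²)))·K(k)) holds, where I₁(b) = ∫_{−1}^{1} (1 − x² sin²b)² / (√(1−x²)·√(1 + cos²b − x² sin²b)) dx. -/

import Mathlib

open Real Set intervalIntegral MeasureTheory

/-- Complete elliptic integral of the first kind. -/
noncomputable def ellK (k : ℝ) : ℝ :=
  ∫ x in (0 : ℝ)..1, 1 / (Real.sqrt (1 - x ^ 2) * Real.sqrt (1 - k ^ 2 * x ^ 2))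

/-- Complete elliptic integral of the second kind. -/
noncomputable def ellE (k : ℝ) : ℝ :=
  ∫ x in (0 : ℝ)..1, Real.sqrt (1 - k ^ 2 * x ^ 2) / Real.sqrt (1 - x ^ 2)


lemma aux_integrable (k : ℝ) (hk0 : 0 ≤ k) (hk1 : k < 1) (P : ℝ → ℝ) (hP : Continuous P) :
    IntervalIntegrable (fun x => P x / (Real.sqrt (1 - x ^ 2) * Real.sqrt (1 - k ^ 2 * x ^ 2)))
      MeasureTheory.volume 0 1 := by
  obtain ⟨M, hM⟩ := isCompact_Icc.exists_bound_of_continuousOn (s := Icc (0:ℝ) 1) hP.continuousOn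
  have hk2 : 0 < 1 - k ^ 2 := by nlinarith
  -- dominating function
  set C : ℝ := M / Real.sqrt (1 - k ^ 2) with hC
  have hg : IntervalIntegrable (fun x => C * (1 - x) ^ (-(1/2) : ℝ)) volume 0 1 := by
    have h1 : IntervalIntegrable (fun x : ℝ => x ^ (-(1/2) : ℝ)) volume 0 1 :=
      intervalIntegral.intervalIntegrable_rpow' (by norm_num)
    have h2 := (h1.comp_sub_left 1)
    simp only [sub_zero, sub_self] at h2
    exact (h2.symm.const_mul C)
  rw [intervalIntegrable_iff] at hg ⊢
  refine MeasureTheory.Integrable.mono hg ?_ ?_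
  · apply Measurable.aestronglyMeasurable
    exact hP.measurable.div ((Real.continuous_sqrt.comp (by continuity)).measurable.mul
      (Real.continuous_sqrt.comp (by continuity)).measurable)
  · rw [MeasureTheory.ae_restrict_iff' measurableSet_uIoc]
    refine Filter.Eventually.of_forall (fun x hx => ?_)
    rw [Set.uIoc_of_le (by norm_num : (0:ℝ) ≤ 1)] at hx
    obtain ⟨hx0, hx1⟩ := hx
    have hxIcc : x ∈ Icc (0:ℝ) 1 := ⟨le_of_lt hx0, hx1⟩
    have hMx := hM x hxIcc
    have hM0 : 0 ≤ M := le_trans (norm_nonneg _) hMx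
    have h1x : 0 ≤ 1 - x := by linarith
    have hsmall : Real.sqrt (1 - x) * Real.sqrt (1 - k ^ 2) ≤
        Real.sqrt (1 - x ^ 2) * Real.sqrt (1 - k ^ 2 * x ^ 2) := by
      have e1 : (1:ℝ) - x ≤ 1 - x ^ 2 := by nlinarith [mul_le_of_le_one_right hx0.le hx1]
      have e2 : (1:ℝ) - k ^ 2 ≤ 1 - k ^ 2 * x ^ 2 := by
        nlinarith [mul_nonneg (sq_nonneg k) (by nlinarith [mul_le_of_le_one_right hx0.le hx1] : (0:ℝ) ≤ 1 - x ^ 2)]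
      exact mul_le_mul (Real.sqrt_le_sqrt e1) (Real.sqrt_le_sqrt e2)
        (Real.sqrt_nonneg _) (Real.sqrt_nonneg _)
    have hDnn : 0 ≤ Real.sqrt (1 - x ^ 2) * Real.sqrt (1 - k ^ 2 * x ^ 2) :=
      mul_nonneg (Real.sqrt_nonneg _) (Real.sqrt_nonneg _)
    rw [Real.norm_eq_abs, Real.norm_eq_abs, abs_div, abs_of_nonneg hDnn]
    have hrpow : (1 - x) ^ (-(1/2) : ℝ) = 1 / Real.sqrt (1 - x) := by
      rw [Real.rpow_neg h1x, Real.sqrt_eq_rpow]; norm_num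
    rcases eq_or_lt_of_le h1x with h | h
    · -- x = 1
      have hx1' : x = 1 := by linarith
      subst hx1'
      simp only [one_pow, sub_self, Real.sqrt_zero, zero_mul, mul_zero, div_zero, abs_zero]
      rw [Real.zero_rpow (by norm_num : (-(1/2):ℝ) ≠ (0:ℝ))]
      simp
    · -- x < 1
      have hs1 : 0 < Real.sqrt (1 - x) := Real.sqrt_pos.mpr h
      have hs2 : 0 < Real.sqrt (1 - k ^ 2) := Real.sqrt_pos.mpr hk2
      have hD : 0 < Real.sqrt (1 - x ^ 2) * Real.sqrt (1 - k ^ 2 * x ^ 2) :=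
        lt_of_lt_of_le (by positivity) hsmall
      have : |P x| / (Real.sqrt (1 - x ^ 2) * Real.sqrt (1 - k ^ 2 * x ^ 2)) ≤
          M / (Real.sqrt (1 - x) * Real.sqrt (1 - k ^ 2)) := by
        apply div_le_div₀ (by positivity) (by simpa using hMx) (by positivity) hsmall
      refine le_trans this ?_
      rw [abs_of_nonneg (by positivity), hrpow, hC]
      exact le_of_eq (by ring)

lemma ftc_zero (k : ℝ) (hk0 : 0 ≤ k) (hk1 : k < 1) :
    (∫ x in (0:ℝ)..1, (1 - 2 * (1 + k ^ 2) * x ^ 2 + 3 * k ^ 2 * x ^ 4) /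
      (Real.sqrt (1 - x ^ 2) * Real.sqrt (1 - k ^ 2 * x ^ 2))) = 0 := by
  have key := intervalIntegral.integral_eq_sub_of_hasDerivAt_of_le (a := 0) (b := 1)
    (f := fun x => x * (Real.sqrt (1 - x ^ 2) * Real.sqrt (1 - k ^ 2 * x ^ 2)))
    (f' := fun x => (1 - 2 * (1 + k ^ 2) * x ^ 2 + 3 * k ^ 2 * x ^ 4) /
      (Real.sqrt (1 - x ^ 2) * Real.sqrt (1 - k ^ 2 * x ^ 2)))
    (by norm_num)
    (by fun_prop)
    ?_
    (aux_integrable k hk0 hk1 _ (by continuity))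
  · rw [key]; norm_num
  · intro x hx
    obtain ⟨hx0, hx1⟩ := hx
    have h1 : (0:ℝ) < 1 - x ^ 2 := by nlinarith
    have h2 : (0:ℝ) < 1 - k ^ 2 * x ^ 2 := by nlinarith [sq_nonneg (k*x), sq_nonneg k]
    have s1 : 0 < Real.sqrt (1 - x ^ 2) := Real.sqrt_pos.mpr h1
    have s2 : 0 < Real.sqrt (1 - k ^ 2 * x ^ 2) := Real.sqrt_pos.mpr h2
    have q1 : Real.sqrt (1 - x ^ 2) ^ 2 = 1 - x ^ 2 := Real.sq_sqrt h1.le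
    have q2 : Real.sqrt (1 - k ^ 2 * x ^ 2) ^ 2 = 1 - k ^ 2 * x ^ 2 := Real.sq_sqrt h2.le
    have d1 : HasDerivAt (fun x : ℝ => 1 - x ^ 2) (-(2 * x)) x := by
      simpa using ((hasDerivAt_pow 2 x).const_sub 1)
    have d2 : HasDerivAt (fun x : ℝ => 1 - k ^ 2 * x ^ 2) (-(k ^ 2 * (2 * x))) x := by
      simpa using (((hasDerivAt_pow 2 x).const_mul (k ^ 2)).const_sub 1)
    have e1 : HasDerivAt (fun x : ℝ => Real.sqrt (1 - x ^ 2))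
        (1 / (2 * Real.sqrt (1 - x ^ 2)) * (-(2 * x))) x :=
      (Real.hasDerivAt_sqrt h1.ne').comp x d1
    have e2 : HasDerivAt (fun x : ℝ => Real.sqrt (1 - k ^ 2 * x ^ 2))
        (1 / (2 * Real.sqrt (1 - k ^ 2 * x ^ 2)) * (-(k ^ 2 * (2 * x)))) x :=
      (Real.hasDerivAt_sqrt h2.ne').comp x d2
    have e3 := e1.mul e2
    have e4 := (hasDerivAt_id x).mul e3
    convert e4 using 1
    · rfl
    · rfl
    simp only [Pi.mul_apply, id]
    set a := Real.sqrt (1 - x ^ 2) with ha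
    set b := Real.sqrt (1 - k ^ 2 * x ^ 2) with hb
    field_simp
    linear_combination (k^2*x^2 - b^2) * q1 + (2*x^2 - 1) * q2

lemma ellE_eq (k : ℝ) : ellE k =
    ∫ x in (0:ℝ)..1, (1 - k ^ 2 * x ^ 2) /
      (Real.sqrt (1 - x ^ 2) * Real.sqrt (1 - k ^ 2 * x ^ 2)) := by
  unfold ellE
  apply intervalIntegral.integral_congr
  intro x _
  simp only
  rcases eq_or_ne (Real.sqrt (1 - k ^ 2 * x ^ 2)) 0 with h | h
  · rw [h]; simp
  · have ha : 0 < 1 - k ^ 2 * x ^ 2 := Real.sqrt_ne_zero'.mp h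
    rcases eq_or_ne (Real.sqrt (1 - x ^ 2)) 0 with hs | hs
    · simp [hs]
    · field_simp
      have hms : Real.sqrt (1 - k ^ 2 * x ^ 2) * Real.sqrt (1 - k ^ 2 * x ^ 2) = 1 - k ^ 2 * x ^ 2 :=
        Real.mul_self_sqrt ha.le
      linear_combination hms


set_option maxHeartbeats 1000000 in
/-- For `b ∈ (0, π/2)` and `k ∈ (0,1)` with `k² = sin²b/(1 + cos²b)`,
`I₁(b) = (4/3) √(2/(1+k²)) (E(k) − ((1−k²)(1+3k²)/(4(1+k²))) K(k))`. -/
theorem I1_elliptic (b k : ℝ) (hb : b ∈ Ioo 0 (π / 2)) (hk : k ∈ Ioo (0 : ℝ) 1)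
    (hk2 : k ^ 2 = Real.sin b ^ 2 / (1 + Real.cos b ^ 2)) :
    (∫ x in (-1 : ℝ)..1, (1 - x ^ 2 * Real.sin b ^ 2) ^ 2 /
        (Real.sqrt (1 - x ^ 2) *
          Real.sqrt (1 + Real.cos b ^ 2 - x ^ 2 * Real.sin b ^ 2))) =
    4 / 3 * Real.sqrt (2 / (1 + k ^ 2)) *
      (ellE k - (1 - k ^ 2) * (1 + 3 * k ^ 2) / (4 * (1 + k ^ 2)) * ellK k) := by
  obtain ⟨hk0, hk1⟩ := hk
  have hone : (0:ℝ) < 1 + k ^ 2 := by positivity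
  -- trig identities
  have hcos2 : Real.cos b ^ 2 = (1 - k ^ 2) / (1 + k ^ 2) := by
    have h1 : Real.sin b ^ 2 = 1 - Real.cos b ^ 2 := by
      have := Real.sin_sq_add_cos_sq b; linarith
    have h2 : (0:ℝ) < 1 + Real.cos b ^ 2 := by nlinarith [sq_nonneg (Real.cos b)]
    rw [eq_div_iff hone.ne']
    rw [eq_div_iff h2.ne'] at hk2
    nlinarith [hk2, h1]
  have hsin2 : Real.sin b ^ 2 = 2 * k ^ 2 / (1 + k ^ 2) := by
    have h1 : Real.sin b ^ 2 = 1 - Real.cos b ^ 2 := by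
      have := Real.sin_sq_add_cos_sq b; linarith
    rw [h1, hcos2]; field_simp; ring
  set w := Real.sqrt (2 / (1 + k ^ 2)) with hwdef
  have hw2 : w ^ 2 = 2 / (1 + k ^ 2) := Real.sq_sqrt (by positivity)
  have hwpos : 0 < w := Real.sqrt_pos.mpr (by positivity)
  set c0 : ℝ := 1 / ((1 + k ^ 2) ^ 2 * w) with hc0
  set g : ℝ → ℝ := fun x => c0 * (((1 + k ^ 2) - 2 * k ^ 2 * x ^ 2) ^ 2 /
      (Real.sqrt (1 - x ^ 2) * Real.sqrt (1 - k ^ 2 * x ^ 2))) with hg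
  -- Step 1: rewrite the integrand as g on [-1,1]
  have hcongr : (∫ x in (-1 : ℝ)..1, (1 - x ^ 2 * Real.sin b ^ 2) ^ 2 /
        (Real.sqrt (1 - x ^ 2) *
          Real.sqrt (1 + Real.cos b ^ 2 - x ^ 2 * Real.sin b ^ 2))) =
      ∫ x in (-1 : ℝ)..1, g x := by
    apply intervalIntegral.integral_congr
    intro x hx
    rw [Set.uIcc_of_le (by norm_num : (-1:ℝ) ≤ 1)] at hx
    obtain ⟨hxl, hxr⟩ := hx
    dsimp only
    have hx2 : x ^ 2 ≤ 1 := by nlinarith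
    have hkk : k ^ 2 ≤ 1 := by nlinarith
    have hkx : (0:ℝ) ≤ 1 - k ^ 2 * x ^ 2 := by nlinarith [sq_nonneg k, sq_nonneg x]
    have e1 : 1 + Real.cos b ^ 2 - x ^ 2 * Real.sin b ^ 2 =
        (2 / (1 + k ^ 2)) * (1 - k ^ 2 * x ^ 2) := by
      rw [hcos2, hsin2]; field_simp; ring
    have e2 : 1 - x ^ 2 * Real.sin b ^ 2 = ((1 + k ^ 2) - 2 * k ^ 2 * x ^ 2) / (1 + k ^ 2) := by
      rw [hsin2]; field_simp
    rw [e1, e2, Real.sqrt_mul (by positivity : (0:ℝ) ≤ 2 / (1 + k ^ 2)), ← hwdef]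
    simp only [hg, hc0]
    rcases eq_or_ne (Real.sqrt (1 - x ^ 2)) 0 with hs | hs
    · rw [hs]; simp
    · rcases eq_or_ne (Real.sqrt (1 - k ^ 2 * x ^ 2)) 0 with ht | ht
      · rw [ht]; simp
      · field_simp
        try ring
        try simp
  rw [hcongr]
  -- Step 2: evenness
  have hgeven : ∀ x, g (-x) = g x := by
    intro x
    simp only [hg, Even.neg_pow even_two]
  have hint01 : IntervalIntegrable g volume 0 1 := by
    simp only [hg]
    exact (aux_integrable k hk0.le hk1 _ (by fun_prop)).const_mul c0
  have hintm : IntervalIntegrable g volume (-1) 0 := by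
    have h2 := hint01.comp_sub_left 0
    simp only [zero_sub, sub_zero] at h2
    have h4 : (fun x => g (-x)) = g := funext fun x => hgeven x
    rw [h4] at h2
    exact h2.symm
  have hsplit_int : (∫ x in (-1:ℝ)..1, g x) = 2 * ∫ x in (0:ℝ)..1, g x := by
    rw [← intervalIntegral.integral_add_adjacent_intervals hintm hint01]
    have : (∫ x in (-1:ℝ)..0, g x) = ∫ x in (0:ℝ)..1, g x := by
      rw [show (∫ x in (-1:ℝ)..0, g x) = ∫ x in (-1:ℝ)..(-0:ℝ), g x by norm_num]
      rw [← intervalIntegral.integral_comp_neg g]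
      apply intervalIntegral.integral_congr
      intro x _
      exact hgeven x
    rw [this]; ring
  rw [hsplit_int]
  -- Step 3: compute ∫₀¹ g
  have hptsplit : (fun x => ((1 + k ^ 2) - 2 * k ^ 2 * x ^ 2) ^ 2 /
      (Real.sqrt (1 - x ^ 2) * Real.sqrt (1 - k ^ 2 * x ^ 2))) =
      fun x => (4 / 3 * (1 + k ^ 2) * (1 - k ^ 2 * x ^ 2)) /
          (Real.sqrt (1 - x ^ 2) * Real.sqrt (1 - k ^ 2 * x ^ 2)) +
        (-(1 - k ^ 2) * (1 + 3 * k ^ 2) / 3) /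
          (Real.sqrt (1 - x ^ 2) * Real.sqrt (1 - k ^ 2 * x ^ 2)) +
        (4 / 3 * k ^ 2 * (1 - 2 * (1 + k ^ 2) * x ^ 2 + 3 * k ^ 2 * x ^ 4)) /
          (Real.sqrt (1 - x ^ 2) * Real.sqrt (1 - k ^ 2 * x ^ 2)) := by
    funext x
    rw [← add_div, ← add_div]
    congr 1
    ring
  have hi1 : IntervalIntegrable (fun x => (4 / 3 * (1 + k ^ 2) * (1 - k ^ 2 * x ^ 2)) /
      (Real.sqrt (1 - x ^ 2) * Real.sqrt (1 - k ^ 2 * x ^ 2))) volume 0 1 :=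
    aux_integrable k hk0.le hk1 _ (by fun_prop)
  have hi2 : IntervalIntegrable (fun x => (-(1 - k ^ 2) * (1 + 3 * k ^ 2) / 3) /
      (Real.sqrt (1 - x ^ 2) * Real.sqrt (1 - k ^ 2 * x ^ 2))) volume 0 1 :=
    aux_integrable k hk0.le hk1 _ (by fun_prop)
  have hi3 : IntervalIntegrable (fun x => (4 / 3 * k ^ 2 * (1 - 2 * (1 + k ^ 2) * x ^ 2 + 3 * k ^ 2 * x ^ 4)) /
      (Real.sqrt (1 - x ^ 2) * Real.sqrt (1 - k ^ 2 * x ^ 2))) volume 0 1 :=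
    aux_integrable k hk0.le hk1 _ (by fun_prop)
  have hval : (∫ x in (0:ℝ)..1, g x) =
      c0 * (4 / 3 * (1 + k ^ 2) * ellE k + (-(1 - k ^ 2) * (1 + 3 * k ^ 2) / 3) * ellK k) := by
    simp only [hg]
    rw [intervalIntegral.integral_const_mul]
    congr 1
    rw [hptsplit]
    rw [intervalIntegral.integral_add (hi1.add hi2) hi3,
        intervalIntegral.integral_add hi1 hi2]
    have v1 : (∫ x in (0:ℝ)..1, (4 / 3 * (1 + k ^ 2) * (1 - k ^ 2 * x ^ 2)) /
        (Real.sqrt (1 - x ^ 2) * Real.sqrt (1 - k ^ 2 * x ^ 2))) =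
        4 / 3 * (1 + k ^ 2) * ellE k := by
      rw [ellE_eq]
      rw [← intervalIntegral.integral_const_mul]
      apply intervalIntegral.integral_congr
      intro x _
      dsimp only
      rw [mul_div_assoc]
    have v2 : (∫ x in (0:ℝ)..1, (-(1 - k ^ 2) * (1 + 3 * k ^ 2) / 3) /
        (Real.sqrt (1 - x ^ 2) * Real.sqrt (1 - k ^ 2 * x ^ 2))) =
        (-(1 - k ^ 2) * (1 + 3 * k ^ 2) / 3) * ellK k := by
      unfold ellK
      rw [← intervalIntegral.integral_const_mul]
      apply intervalIntegral.integral_congr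
      intro x _
      dsimp only
      rw [mul_one_div]
    have v3 : (∫ x in (0:ℝ)..1, (4 / 3 * k ^ 2 * (1 - 2 * (1 + k ^ 2) * x ^ 2 + 3 * k ^ 2 * x ^ 4)) /
        (Real.sqrt (1 - x ^ 2) * Real.sqrt (1 - k ^ 2 * x ^ 2))) = 0 := by
      have : (fun x => (4 / 3 * k ^ 2 * (1 - 2 * (1 + k ^ 2) * x ^ 2 + 3 * k ^ 2 * x ^ 4)) /
          (Real.sqrt (1 - x ^ 2) * Real.sqrt (1 - k ^ 2 * x ^ 2))) =
          (fun x => (4 / 3 * k ^ 2) * ((1 - 2 * (1 + k ^ 2) * x ^ 2 + 3 * k ^ 2 * x ^ 4) /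
          (Real.sqrt (1 - x ^ 2) * Real.sqrt (1 - k ^ 2 * x ^ 2)))) := by
        funext x; rw [mul_div_assoc]
      rw [this, intervalIntegral.integral_const_mul, ftc_zero k hk0.le hk1, mul_zero]
    rw [v1, v2, v3]
    ring
  rw [hval]
  -- Step 4: final algebra
  have hw2' : w ^ 2 * (1 + k ^ 2) = 2 := by rw [hw2]; field_simp
  have hcw : 1 / ((1 + k ^ 2) ^ 2 * w) = w / (2 * (1 + k ^ 2)) := by
    rw [div_eq_div_iff (by positivity) (by positivity)]
    linear_combination (-(1 + k ^ 2)) * hw2'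
  rw [hc0, hcw]
  field_simp
  ring
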